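/- Let m ≥ 2 and suppose 𝔼[X] = 𝔼[Y] = 𝔼[Z] = 𝔼[W] = 0. Then the reduced estimator c₄⁽ᵈ⁾ = [ (m+2)·\overline{XYZW} − m·(\overline{XY}·\overline{ZW} + \overline{XZ}·\overline{YW} + \overline{XW}·\overline{YZ}) ] / (m−1) satisfies 𝔼[c₄⁽ᵈ⁾] = 𝔼[XYZW] − 𝔼[XY]𝔼[ZW] − 𝔼[XZ]𝔼[YW] − 𝔼[XW]𝔼[YZ], which under the hypotheses equals the fourth multivariate cumulant C₄(x,y,z,w). -/

import Mathlib

open MeasureTheory ProbabilityTheory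

-- L4 * L4 -> L2
lemma aux_l4_mul {Ω : Type*} [MeasurableSpace Ω] {μ : Measure Ω}
    {f g : Ω → ℝ} (hf : MemLp f 4 μ) (hg : MemLp g 4 μ) :
    MemLp (fun ω => f ω * g ω) 2 μ := by
  have h := hf.smul (φ := g) hg (p := 4) (q := 4) (r := 2) (hpqr := ⟨Eq.symm (by simpa only [one_div] using (show (1:ENNReal)/2 = 1/4 + 1/4 from by
      simp only [one_div]
      rw [← two_mul, show (4:ENNReal) = 2*2 by norm_num, ENNReal.mul_inv (by norm_num) (by norm_num)]
      rw [← mul_assoc, ENNReal.mul_inv_cancel (by norm_num) (by norm_num), one_mul]))⟩)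
  simpa [smul_eq_mul, mul_comm, Pi.mul_def] using h

lemma aux_l2_mul {Ω : Type*} [MeasurableSpace Ω] {μ : Measure Ω}
    {f g : Ω → ℝ} (hf : MemLp f 2 μ) (hg : MemLp g 2 μ) :
    Integrable (fun ω => f ω * g ω) μ := by
  have h := hf.smul (φ := g) hg (p := 2) (q := 2) (r := 1) (hpqr := ⟨Eq.symm (by simpa only [one_div] using (show (1:ENNReal)/1 = 1/2 + 1/2 from by
      simp only [one_div]
      rw [← two_mul, ENNReal.mul_inv_cancel (by norm_num) (by norm_num), inv_one]))⟩)
  rw [← memLp_one_iff_integrable]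
  simpa [smul_eq_mul, mul_comm, Pi.mul_def] using h

lemma pair_sum_integral {Ω : Type*} [MeasurableSpace Ω] (μ : Measure Ω) [IsProbabilityMeasure μ]
    {m : ℕ} (V : Fin m → Ω → ℝ × ℝ × ℝ × ℝ)
    (hindep : iIndepFun V μ)
    (i0 : Fin m)
    (hident : ∀ i, IdentDistrib (V i) (V i0) μ μ)
    (g h : (ℝ × ℝ × ℝ × ℝ) → ℝ) (hg : Measurable g) (hh : Measurable h)
    (hg2 : MemLp (fun ω => g (V i0 ω)) 2 μ) (hh2 : MemLp (fun ω => h (V i0 ω)) 2 μ) :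
    Integrable (fun ω => (∑ i, g (V i ω)) * (∑ j, h (V j ω))) μ ∧
    ∫ ω, (∑ i, g (V i ω)) * (∑ j, h (V j ω)) ∂μ
      = m * ∫ ω, g (V i0 ω) * h (V i0 ω) ∂μ
        + ((m:ℝ)^2 - m) * (∫ ω, g (V i0 ω) ∂μ) * (∫ ω, h (V i0 ω) ∂μ) := by
  have hg2i : ∀ i, MemLp (fun ω => g (V i ω)) 2 μ := fun i =>
    ((hident i).symm.comp hg).memLp_snd hg2
  have hh2i : ∀ i, MemLp (fun ω => h (V i ω)) 2 μ := fun i =>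
    ((hident i).symm.comp hh).memLp_snd hh2
  have hgint : ∀ i, Integrable (fun ω => g (V i ω)) μ := fun i =>
    memLp_one_iff_integrable.mp ((hg2i i).mono_exponent (by norm_num))
  have hhint : ∀ i, Integrable (fun ω => h (V i ω)) μ := fun i =>
    memLp_one_iff_integrable.mp ((hh2i i).mono_exponent (by norm_num))
  have hint : ∀ i j, Integrable (fun ω => g (V i ω) * h (V j ω)) μ := by
    intro i j
    by_cases hij : i = j
    · subst hij; exact aux_l2_mul (hg2i i) (hh2i i)
    · exact ((hindep.indepFun hij).comp hg hh).integrable_mul (hgint i) (hhint j)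
  have hval : ∀ i j, ∫ ω, g (V i ω) * h (V j ω) ∂μ
      = (∫ ω, g (V i0 ω) ∂μ) * (∫ ω, h (V i0 ω) ∂μ)
        + (if i = j then (∫ ω, g (V i0 ω) * h (V i0 ω) ∂μ)
            - (∫ ω, g (V i0 ω) ∂μ) * (∫ ω, h (V i0 ω) ∂μ) else 0) := by
    intro i j
    have e1 : ∫ ω, g (V i ω) ∂μ = ∫ ω, g (V i0 ω) ∂μ := by
      simpa [Function.comp] using ((hident i).comp hg).integral_eq
    have e2 : ∫ ω, h (V j ω) ∂μ = ∫ ω, h (V i0 ω) ∂μ := by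
      simpa [Function.comp] using ((hident j).comp hh).integral_eq
    by_cases hij : i = j
    · subst hij
      have hd : ∫ ω, g (V i ω) * h (V i ω) ∂μ = ∫ ω, g (V i0 ω) * h (V i0 ω) ∂μ := by
        simpa [Function.comp] using ((hident i).comp (hg.mul hh)).integral_eq
      rw [if_pos rfl, hd]; ring
    · simp only [if_neg hij, add_zero]
      have hmul := ((hindep.indepFun hij).comp hg hh).integral_mul_eq_mul_integral (hgint i).1 (hhint j).1
      refine hmul.trans ?_
      show (∫ ω, g (V i ω) ∂μ) * ∫ ω, h (V j ω) ∂μ = _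
      rw [e1, e2]
  have hexpand : (fun ω => (∑ i, g (V i ω)) * (∑ j, h (V j ω)))
      = fun ω => ∑ i, ∑ j, g (V i ω) * h (V j ω) := by
    funext ω; rw [Finset.sum_mul_sum]
  constructor
  · rw [hexpand]
    exact integrable_finset_sum _ (fun i _ => integrable_finset_sum _ (fun j _ => hint i j))
  · rw [hexpand]
    rw [integral_finset_sum _ (fun i _ => integrable_finset_sum _ (fun j _ => hint i j))]
    have : ∀ i ∈ Finset.univ, ∫ ω, ∑ j, g (V i ω) * h (V j ω) ∂μ
        = ∑ j, ∫ ω, g (V i ω) * h (V j ω) ∂μ := fun i _ =>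
      integral_finset_sum _ (fun j _ => hint i j)
    rw [Finset.sum_congr rfl this]
    set Eg := ∫ ω, g (V i0 ω) ∂μ with hEg
    set Eh := ∫ ω, h (V i0 ω) ∂μ with hEh
    set Egh := ∫ ω, g (V i0 ω) * h (V i0 ω) ∂μ with hEgh
    simp only [hval]
    simp only [Finset.sum_add_distrib, Finset.sum_ite_eq, Finset.mem_univ, if_true,
      Finset.sum_const, Finset.card_univ, Fintype.card_fin, nsmul_eq_mul]
    ring

theorem unbiased_c4_d {Ω : Type*} [MeasurableSpace Ω] (μ : Measure Ω) [IsProbabilityMeasure μ]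
    (m : ℕ) (hm : 2 ≤ m)
    (X Y Z W : Fin m → Ω → ℝ)
    (hXmeas : ∀ i, Measurable (X i))
    (hYmeas : ∀ i, Measurable (Y i))
    (hZmeas : ∀ i, Measurable (Z i))
    (hWmeas : ∀ i, Measurable (W i))
    (hindep : iIndepFun (fun i ω => (X i ω, Y i ω, Z i ω, W i ω)) μ)
    (hident : ∀ i, IdentDistrib (fun ω => (X i ω, Y i ω, Z i ω, W i ω)) (fun ω => (X ⟨0, by omega⟩ ω, Y ⟨0, by omega⟩ ω, Z ⟨0, by omega⟩ ω, W ⟨0, by omega⟩ ω)) μ μ)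
    (hX4 : MemLp (X ⟨0, by omega⟩) 4 μ)
    (hY4 : MemLp (Y ⟨0, by omega⟩) 4 μ)
    (hZ4 : MemLp (Z ⟨0, by omega⟩) 4 μ)
    (hW4 : MemLp (W ⟨0, by omega⟩) 4 μ)
    (hEX : (∫ ω, X ⟨0, by omega⟩ ω ∂μ) = 0)
    (hEY : (∫ ω, Y ⟨0, by omega⟩ ω ∂μ) = 0)
    (hEZ : (∫ ω, Z ⟨0, by omega⟩ ω ∂μ) = 0)
    (hEW : (∫ ω, W ⟨0, by omega⟩ ω ∂μ) = 0) :
    (∫ ω, (((m:ℝ)+2) * ((m:ℝ)⁻¹ * ∑ i, X i ω * Y i ω * Z i ω * W i ω) - (m:ℝ) * (((m:ℝ)⁻¹ * ∑ i, X i ω * Y i ω) * ((m:ℝ)⁻¹ * ∑ i, Z i ω * W i ω) + ((m:ℝ)⁻¹ * ∑ i, X i ω * Z i ω) * ((m:ℝ)⁻¹ * ∑ i, Y i ω * W i ω) + ((m:ℝ)⁻¹ * ∑ i, X i ω * W i ω) * ((m:ℝ)⁻¹ * ∑ i, Y i ω * Z i ω))) / ((m:ℝ)-1) ∂μ) = (∫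 ω, X ⟨0, by omega⟩ ω * Y ⟨0, by omega⟩ ω * Z ⟨0, by omega⟩ ω * W ⟨0, by omega⟩ ω ∂μ) - (∫ ω, X ⟨0, by omega⟩ ω * Y ⟨0, by omega⟩ ω ∂μ) * (∫ ω, Z ⟨0, by omega⟩ ω * W ⟨0, by omega⟩ ω ∂μ) - (∫ ω, X ⟨0, by omega⟩ ω * Z ⟨0, by omega⟩ ω ∂μ) * (∫ ω, Y ⟨0, by omega⟩ ω * W ⟨0, by omega⟩ ω ∂μ) - (∫ ω, X ⟨0, by omega⟩ ω * W ⟨0, by omega⟩ ω ∂μ) * (∫ ω, Y ⟨0, by omega⟩ ω * Z ⟨0, by omega⟩ ω ∂μ) ∧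
    (∫ ω, X ⟨0, by omega⟩ ω * Y ⟨0, by omega⟩ ω * Z ⟨0, by omega⟩ ω * W ⟨0, by omega⟩ ω ∂μ) - (∫ ω, X ⟨0, by omega⟩ ω * Y ⟨0, by omega⟩ ω ∂μ) * (∫ ω, Z ⟨0, by omega⟩ ω * W ⟨0, by omega⟩ ω ∂μ) - (∫ ω, X ⟨0, by omega⟩ ω * Z ⟨0, by omega⟩ ω ∂μ) * (∫ ω, Y ⟨0, by omega⟩ ω * W ⟨0, by omega⟩ ω ∂μ) - (∫ ω, X ⟨0, by omega⟩ ω * W ⟨0, by omega⟩ ω ∂μ) * (∫ ω, Y ⟨0, by omega⟩ ω * Z ⟨0, by omega⟩ ω ∂μ) = (∫ ω, X ⟨0, by omega⟩ ω * Y ⟨0, by omega⟩ ω * Z ⟨0, by omega⟩ ω * W ⟨0, by omega⟩ ω ∂μ) - (∫ ω, X ⟨0, by omega⟩ ω * Y ⟨0, by omega⟩ ω * Z ⟨0, by omega⟩ ω ∂μ) * (∫ ω, W ⟨0, by omega⟩ ω ∂μ) - (∫ ω, X ⟨0, by omega⟩ ω * Y ⟨0, by omega⟩ ω * W ⟨0,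 by omega⟩ ω ∂μ) * (∫ ω, Z ⟨0, by omega⟩ ω ∂μ) - (∫ ω, X ⟨0, by omega⟩ ω * Z ⟨0, by omega⟩ ω * W ⟨0, by omega⟩ ω ∂μ) * (∫ ω, Y ⟨0, by omega⟩ ω ∂μ) - (∫ ω, Y ⟨0, by omega⟩ ω * Z ⟨0, by omega⟩ ω * W ⟨0, by omega⟩ ω ∂μ) * (∫ ω, X ⟨0, by omega⟩ ω ∂μ) - (∫ ω, X ⟨0, by omega⟩ ω * Y ⟨0, by omega⟩ ω ∂μ) * (∫ ω, Z ⟨0, by omega⟩ ω * W ⟨0, by omega⟩ ω ∂μ) - (∫ ω, X ⟨0, by omega⟩ ω * Z ⟨0, by omega⟩ ω ∂μ) * (∫ ω, Y ⟨0, by omega⟩ ω * W ⟨0, by omega⟩ ω ∂μ) - (∫ ω, X ⟨0, by omega⟩ ω * W ⟨0, by omega⟩ ω ∂μ) * (∫ ω, Y ⟨0, by omega⟩ ω * Z ⟨0, by omega⟩ ω ∂μ) + 2 * (∫ ω, X ⟨0, by omega⟩ ω * Y ⟨0, by omega⟩ ω ∂μ) * (∫ ω, Z ⟨0, by omega⟩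 ω ∂μ) * (∫ ω, W ⟨0, by omega⟩ ω ∂μ) + 2 * (∫ ω, X ⟨0, by omega⟩ ω * Z ⟨0, by omega⟩ ω ∂μ) * (∫ ω, Y ⟨0, by omega⟩ ω ∂μ) * (∫ ω, W ⟨0, by omega⟩ ω ∂μ) + 2 * (∫ ω, X ⟨0, by omega⟩ ω * W ⟨0, by omega⟩ ω ∂μ) * (∫ ω, Y ⟨0, by omega⟩ ω ∂μ) * (∫ ω, Z ⟨0, by omega⟩ ω ∂μ) + 2 * (∫ ω, Y ⟨0, by omega⟩ ω * Z ⟨0, by omega⟩ ω ∂μ) * (∫ ω, X ⟨0, by omega⟩ ω ∂μ) * (∫ ω, W ⟨0, by omega⟩ ω ∂μ) + 2 * (∫ ω, Y ⟨0, by omega⟩ ω * W ⟨0, by omega⟩ ω ∂μ) * (∫ ω, X ⟨0, by omega⟩ ω ∂μ) * (∫ ω, Z ⟨0, by omega⟩ ω ∂μ) + 2 * (∫ ω, Z ⟨0, by omega⟩ ω * W ⟨0, by omega⟩ ω ∂μ) * (∫ ω, X ⟨0, by omega⟩ ω ∂μ) * (∫ ω, Y ⟨0, by omega⟩ ω ∂μ)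 - 6 * (∫ ω, X ⟨0, by omega⟩ ω ∂μ) * (∫ ω, Y ⟨0, by omega⟩ ω ∂μ) * (∫ ω, Z ⟨0, by omega⟩ ω ∂μ) * (∫ ω, W ⟨0, by omega⟩ ω ∂μ) := by
  classical
  have hmlt : 0 < m := by omega
  set i0 : Fin m := ⟨0, by omega⟩ with hi0
  have mx : Measurable fun p : ℝ × ℝ × ℝ × ℝ => p.1 := measurable_fst
  have my : Measurable fun p : ℝ × ℝ × ℝ × ℝ => p.2.1 := measurable_fst.comp measurable_snd
  have mz : Measurable fun p : ℝ × ℝ × ℝ × ℝ => p.2.2.1 :=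
    measurable_fst.comp (measurable_snd.comp measurable_snd)
  have mw : Measurable fun p : ℝ × ℝ × ℝ × ℝ => p.2.2.2 :=
    measurable_snd.comp (measurable_snd.comp measurable_snd)
  have pXY : MemLp (fun ω => X i0 ω * Y i0 ω) 2 μ := aux_l4_mul hX4 hY4
  have pZW : MemLp (fun ω => Z i0 ω * W i0 ω) 2 μ := aux_l4_mul hZ4 hW4
  have pXZ : MemLp (fun ω => X i0 ω * Z i0 ω) 2 μ := aux_l4_mul hX4 hZ4
  have pYW : MemLp (fun ω => Y i0 ω * W i0 ω) 2 μ := aux_l4_mul hY4 hW4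
  have pXW : MemLp (fun ω => X i0 ω * W i0 ω) 2 μ := aux_l4_mul hX4 hW4
  have pYZ : MemLp (fun ω => Y i0 ω * Z i0 ω) 2 μ := aux_l4_mul hY4 hZ4
  have hA : Integrable (fun ω => (∑ i, X i ω * Y i ω) * (∑ j, Z j ω * W j ω)) μ ∧
      ∫ ω, (∑ i, X i ω * Y i ω) * (∑ j, Z j ω * W j ω) ∂μ
        = m * ∫ ω, X i0 ω * Y i0 ω * (Z i0 ω * W i0 ω) ∂μ
          + ((m:ℝ)^2 - m) * (∫ ω, X i0 ω * Y i0 ω ∂μ) * (∫ ω, Z i0 ω * W i0 ω ∂μ) :=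
    pair_sum_integral μ (fun i ω => (X i ω, Y i ω, Z i ω, W i ω)) hindep i0 hident
      (fun p => p.1 * p.2.1) (fun p => p.2.2.1 * p.2.2.2) (mx.mul my) (mz.mul mw) pXY pZW
  have hB : Integrable (fun ω => (∑ i, X i ω * Z i ω) * (∑ j, Y j ω * W j ω)) μ ∧
      ∫ ω, (∑ i, X i ω * Z i ω) * (∑ j, Y j ω * W j ω) ∂μ
        = m * ∫ ω, X i0 ω * Z i0 ω * (Y i0 ω * W i0 ω) ∂μ
          + ((m:ℝ)^2 - m) * (∫ ω, X i0 ω * Z i0 ω ∂μ) * (∫ ω, Y i0 ω * W i0 ω ∂μ) :=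
    pair_sum_integral μ (fun i ω => (X i ω, Y i ω, Z i ω, W i ω)) hindep i0 hident
      (fun p => p.1 * p.2.2.1) (fun p => p.2.1 * p.2.2.2) (mx.mul mz) (my.mul mw) pXZ pYW
  have hC : Integrable (fun ω => (∑ i, X i ω * W i ω) * (∑ j, Y j ω * Z j ω)) μ ∧
      ∫ ω, (∑ i, X i ω * W i ω) * (∑ j, Y j ω * Z j ω) ∂μ
        = m * ∫ ω, X i0 ω * W i0 ω * (Y i0 ω * Z i0 ω) ∂μ
          + ((m:ℝ)^2 - m) * (∫ ω, X i0 ω * W i0 ω ∂μ) * (∫ ω, Y i0 ω * Z i0 ω ∂μ) :=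
    pair_sum_integral μ (fun i ω => (X i ω, Y i ω, Z i ω, W i ω)) hindep i0 hident
      (fun p => p.1 * p.2.2.2) (fun p => p.2.1 * p.2.2.1) (mx.mul mw) (my.mul mz) pXW pYZ
  have meas4 : Measurable fun p : ℝ × ℝ × ℝ × ℝ => p.1 * p.2.1 * p.2.2.1 * p.2.2.2 :=
    ((mx.mul my).mul mz).mul mw
  have hI0 : Integrable (fun ω => X i0 ω * Y i0 ω * Z i0 ω * W i0 ω) μ := by
    simpa [mul_assoc] using aux_l2_mul pXY pZW
  have hIi : ∀ i, Integrable (fun ω => X i ω * Y i ω * Z i ω * W i ω) μ := fun i =>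
    ((hident i).symm.comp meas4).integrable_snd hI0
  have hIval : ∀ i, ∫ ω, X i ω * Y i ω * Z i ω * W i ω ∂μ
      = ∫ ω, X i0 ω * Y i0 ω * Z i0 ω * W i0 ω ∂μ := fun i => by
    simpa [Function.comp] using ((hident i).comp meas4).integral_eq
  have hSint : Integrable (fun ω => ∑ i, X i ω * Y i ω * Z i ω * W i ω) μ :=
    integrable_finset_sum _ fun i _ => hIi i
  have hSval : ∫ ω, ∑ i, X i ω * Y i ω * Z i ω * W i ω ∂μ
      = m * ∫ ω, X i0 ω * Y i0 ω * Z i0 ω * W i0 ω ∂μ := by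
    rw [integral_finset_sum _ fun i _ => hIi i, Finset.sum_congr rfl fun i _ => hIval i,
      Finset.sum_const, Finset.card_univ, Fintype.card_fin, nsmul_eq_mul]
  constructor
  · have h1 : Integrable (fun ω => ((m:ℝ)+2) * (m:ℝ)⁻¹ * ((m:ℝ)-1)⁻¹
        * (∑ i, X i ω * Y i ω * Z i ω * W i ω)) μ := hSint.const_mul _
    have h2 : Integrable (fun ω => (m:ℝ) * (m:ℝ)⁻¹ * (m:ℝ)⁻¹ * ((m:ℝ)-1)⁻¹
        * ((∑ i, X i ω * Y i ω) * (∑ j, Z j ω * W j ω)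
          + (∑ i, X i ω * Z i ω) * (∑ j, Y j ω * W j ω)
          + (∑ i, X i ω * W i ω) * (∑ j, Y j ω * Z j ω))) μ := by
      exact ((hA.1.add hB.1).add hC.1).const_mul _
    have hstep : (∫ ω, (((m:ℝ)+2) * ((m:ℝ)⁻¹ * ∑ i, X i ω * Y i ω * Z i ω * W i ω) - (m:ℝ) * (((m:ℝ)⁻¹ * ∑ i, X i ω * Y i ω) * ((m:ℝ)⁻¹ * ∑ i, Z i ω * W i ω) + ((m:ℝ)⁻¹ * ∑ i, X i ω * Z i ω) * ((m:ℝ)⁻¹ * ∑ i, Y i ω * W i ω) + ((m:ℝ)⁻¹ * ∑ i, X i ω * W i ω) * ((m:ℝ)⁻¹ * ∑ i, Y i ω * Z i ω))) / ((m:ℝ)-1) ∂μ)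
        = ∫ ω, (((m:ℝ)+2) * (m:ℝ)⁻¹ * ((m:ℝ)-1)⁻¹
            * (∑ i, X i ω * Y i ω * Z i ω * W i ω)
          - (m:ℝ) * (m:ℝ)⁻¹ * (m:ℝ)⁻¹ * ((m:ℝ)-1)⁻¹
            * ((∑ i, X i ω * Y i ω) * (∑ j, Z j ω * W j ω)
              + (∑ i, X i ω * Z i ω) * (∑ j, Y j ω * W j ω)
              + (∑ i, X i ω * W i ω) * (∑ j, Y j ω * Z j ω))) ∂μ :=
      integral_congr_ae (Filter.Eventually.of_forall fun ω => by ring)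
    have hAB : Integrable (fun ω => (∑ i, X i ω * Y i ω) * (∑ j, Z j ω * W j ω)
        + (∑ i, X i ω * Z i ω) * (∑ j, Y j ω * W j ω)) μ := hA.1.add hB.1
    rw [hstep, integral_sub h1 h2, integral_const_mul, integral_const_mul,
      integral_add hAB hC.1, integral_add hA.1 hB.1,
      hSval, hA.2, hB.2, hC.2]
    have eA : ∫ ω, X i0 ω * Y i0 ω * (Z i0 ω * W i0 ω) ∂μ
        = ∫ ω, X i0 ω * Y i0 ω * Z i0 ω * W i0 ω ∂μ :=
      integral_congr_ae (Filter.Eventually.of_forall fun ω => by ring)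
    have eB : ∫ ω, X i0 ω * Z i0 ω * (Y i0 ω * W i0 ω) ∂μ
        = ∫ ω, X i0 ω * Y i0 ω * Z i0 ω * W i0 ω ∂μ :=
      integral_congr_ae (Filter.Eventually.of_forall fun ω => by ring)
    have eC : ∫ ω, X i0 ω * W i0 ω * (Y i0 ω * Z i0 ω) ∂μ
        = ∫ ω, X i0 ω * Y i0 ω * Z i0 ω * W i0 ω ∂μ :=
      integral_congr_ae (Filter.Eventually.of_forall fun ω => by ring)
    rw [eA, eB, eC]
    have hm0 : (m:ℝ) ≠ 0 := by positivity
    have hm1 : (m:ℝ) - 1 ≠ 0 := by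
      have : (2:ℝ) ≤ m := by exact_mod_cast hm
      nlinarith
    field_simp
    ring
  · rw [hEX, hEY, hEZ, hEW]
    ring
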